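/- A connected graph G has an orientation of finite diameter if and only if G is 2-edge-connected (bridgeless). (Robbins' theorem.) -/

import Mathlib

/-- `reachIn D k x y` : there is a directed walk of length exactly `k` from `x` to `y`
in the directed graph given by the relation `D`. -/
def reachIn {V : Type*} (D : V → V → Prop) : ℕ → V → V → Prop
  | 0, x, y => x = y
  | n + 1, x, y => ∃ z, D x z ∧ reachIn D n z y

/-- Directed distance: length of a shortest directed path (`⊤` if none exists). -/
noncomputable def ddist {V : Type*} (D : V → V → Prop) (x y : V) : ℕ∞ :=
  sInf {n : ℕ∞ | ∃ k : ℕ, (k : ℕ∞) = n ∧ reachIn D k x y}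

/-- Directed diameter: sup of directed distances over ordered pairs of distinct vertices. -/
noncomputable def ddiam {V : Type*} (D : V → V → Prop) : ℕ∞ :=
  sSup {n : ℕ∞ | ∃ x y : V, x ≠ y ∧ ddist D x y = n}

open Classical in
/-- Wiener index of a directed graph: sum of directed distances over ordered pairs
of distinct vertices. -/
noncomputable def wiener {V : Type*} [Fintype V] (D : V → V → Prop) : ℕ∞ :=
  ∑ x : V, ∑ y : V, if x ≠ y then ddist D x y else 0

/-- `D` is an orientation of the simple graph `G`: every arc of `D` comes from an edge
of `G`, and each edge of `G` gets exactly one of its two directions. -/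
def IsOrientation {V : Type*} (G : SimpleGraph V) (D : V → V → Prop) : Prop :=
  ∀ u v : V, (D u v → G.Adj u v) ∧ (G.Adj u v → (D u v ↔ ¬ D v u))

theorem reachIn_mono {V : Type*} {D D' : V → V → Prop} (h : ∀ a b, D a b → D' a b) :
    ∀ k x y, reachIn D k x y → reachIn D' k x y := by
  intro k
  induction k with
  | zero => intro x y hr; exact hr
  | succ n ih => rintro x y ⟨z, hxz, hz⟩; exact ⟨z, h _ _ hxz, ih _ _ hz⟩
theorem reachIn_trans {V : Type*} {D : V → V → Prop} :
    ∀ k {x y z}, reachIn D k x y → ∀ m, reachIn D m y z → reachIn D (m + k) x z := by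
  intro k
  induction k with
  | zero => intro x y z hxy m hyz; cases hxy; exact hyz
  | succ n ih =>
      rintro x y z ⟨w, hxw, hw⟩ m hyz
      exact ⟨w, hxw, ih hw m hyz⟩
theorem reachIn_single {V : Type*} {D : V → V → Prop} {x y : V} (h : D x y) :
    reachIn D 1 x y := ⟨y, h, rfl⟩
theorem grow {V : Type*} (G : SimpleGraph V) (S : Set V) (a : V) (ha : a ∈ S) :
    ∀ (c : V) (p : G.Walk c a), c ∉ S → p.support.Nodup →
    ∀ (T : Set V) (D : V → V → Prop),
      S ⊆ T → c ∈ T →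
      (∀ u v, D u v → G.Adj u v) →
      (∀ u v, D u v → ¬ D v u) →
      (∀ u v, D u v → u ∈ T ∧ v ∈ T) →
      (∀ x ∈ S, ∀ y ∈ T, ∃ k, reachIn D k x y) →
      (∀ x ∈ T, ∃ k, reachIn D k x c) →
      (∀ x, x ∈ p.support.tail → x ∈ T → x ∈ S) →
      (∀ u v, D u v → v = c → s(u, c) ∉ p.edges) →
      (∀ v, ¬ D c v) →
      ∃ (T' : Set V) (D' : V → V → Prop), T ⊆ T' ∧
        (∀ u v, D' u v → G.Adj u v) ∧ (∀ u v, D' u v → ¬ D' v u) ∧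
        (∀ u v, D' u v → u ∈ T' ∧ v ∈ T') ∧
        (∀ x ∈ T', ∀ y ∈ T', ∃ k, reachIn D' k x y) := by
  intro c p
  induction p with
  | nil => intro hc _; exact absurd ha hc
  | @cons c d a h q ih =>
    intro hc hnd T D hST hcT hadj hasym hsub hreach hto hfut hinto hout
    have hcd : c ≠ d := G.ne_of_adj h
    -- facts about supports
    have htail : (SimpleGraph.Walk.cons h q).support.tail = q.support := by
      simp [SimpleGraph.Walk.support_cons]
    have hndq : q.support.Nodup := by
      rw [SimpleGraph.Walk.support_cons] at hnd; exact hnd.of_cons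
    have hcq : c ∉ q.support := by
      rw [SimpleGraph.Walk.support_cons] at hnd
      exact (List.nodup_cons.mp hnd).1
    have hd_tail : d ∈ (SimpleGraph.Walk.cons h q).support.tail := by
      rw [htail]; exact q.start_mem_support
    have hfirst : s(c, d) ∈ (SimpleGraph.Walk.cons h q).edges := by
      simp [SimpleGraph.Walk.edges_cons]
    -- the new arc
    set D1 : V → V → Prop := fun u v => D u v ∨ (u = c ∧ v = d) with hD1
    have hD1adj : ∀ u v, D1 u v → G.Adj u v := by
      rintro u v (huv | ⟨rfl, rfl⟩)
      · exact hadj _ _ huv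
      · exact h
    have hnotdc : ¬ D d c := by
      intro hdc
      exact hinto _ _ hdc rfl (by rwa [Sym2.eq_swap])
    have hD1asym : ∀ u v, D1 u v → ¬ D1 v u := by
      rintro u v (huv | ⟨rfl, rfl⟩)
      · rintro (hvu | ⟨he1, he2⟩)
        · exact hasym _ _ huv hvu
        · exact hnotdc (he1 ▸ he2 ▸ huv)
      · rintro (hvu | ⟨he1, he2⟩)
        · exact hnotdc hvu
        · exact hcd he1.symm
    have hmono : ∀ k x y, reachIn D k x y → reachIn D1 k x y :=
      reachIn_mono (fun a b hab => Or.inl hab)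
    have hreach1 : ∀ x ∈ S, ∀ y ∈ T ∪ {d}, ∃ k, reachIn D1 k x y := by
      intro x hx y hy
      rcases hy with hy | hy
      · obtain ⟨k, hk⟩ := hreach x hx y hy
        exact ⟨k, hmono _ _ _ hk⟩
      · rcases hy with rfl
        obtain ⟨k, hk⟩ := hto x (hST hx)
        exact ⟨1 + k, reachIn_trans k (hmono _ _ _ hk) 1 (reachIn_single (Or.inr ⟨rfl, rfl⟩))⟩
    have hto1 : ∀ x ∈ T ∪ {d}, ∃ k, reachIn D1 k x d := by
      intro x hx
      rcases hx with hx | hx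
      · obtain ⟨k, hk⟩ := hto x hx
        exact ⟨1 + k, reachIn_trans k (hmono _ _ _ hk) 1 (reachIn_single (Or.inr ⟨rfl, rfl⟩))⟩
      · rcases hx with rfl; exact ⟨0, rfl⟩
    have hsub1 : ∀ u v, D1 u v → u ∈ T ∪ {d} ∧ v ∈ T ∪ {d} := by
      rintro u v (huv | ⟨rfl, rfl⟩)
      · exact ⟨Or.inl (hsub _ _ huv).1, Or.inl (hsub _ _ huv).2⟩
      · exact ⟨Or.inl hcT, Or.inr rfl⟩
    by_cases hdS : d ∈ S
    · -- stop: d is back in S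
      refine ⟨T ∪ {d}, D1, fun x hx => Or.inl hx, hD1adj, hD1asym, hsub1, ?_⟩
      intro x hx y hy
      obtain ⟨k1, hk1⟩ := hto1 x hx
      obtain ⟨k2, hk2⟩ := hreach1 d hdS y hy
      exact ⟨k2 + k1, reachIn_trans k1 hk1 k2 hk2⟩
    · -- continue along the walk
      have hdT : d ∉ T := fun hdT => hdS (hfut d hd_tail hdT)
      have hfut1 : ∀ x, x ∈ q.support.tail → x ∈ T ∪ {d} → x ∈ S := by
        intro x hx hxT
        rcases hxT with hxT | hxT
        · exact hfut x (by rw [htail]; exact List.tail_subset _ hx) hxT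
        · rcases hxT with rfl
          exact absurd hndq (by
            intro hn
            exact (List.nodup_cons.mp (q.support_eq_cons ▸ hn)).1 hx)
      have hinto1 : ∀ u v, D1 u v → v = d → s(u, d) ∉ q.edges := by
        rintro u v (huv | ⟨he1, he2⟩) rfl
        · exact absurd (hsub _ _ huv).2 hdT
        · subst he1
          intro hmem
          exact hcq (q.fst_mem_support_of_mem_edges hmem)
      have hout1 : ∀ v, ¬ D1 d v := by
        rintro v (hv | ⟨he, _⟩)
        · exact hdT (hsub _ _ hv).1
        · exact hcd he.symm
      obtain ⟨T', D', hTT', h1, h2, h3, h4⟩ :=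
        ih ha hdS hndq (T ∪ {d}) D1 (fun x hx => Or.inl (hST hx)) (Or.inr rfl)
          hD1adj hD1asym hsub1 hreach1 hto1 hfut1 hinto1 hout1
      exact ⟨T', D', fun x hx => hTT' (Or.inl hx), h1, h2, h3, h4⟩
theorem cross {V : Type*} {G : SimpleGraph V} {S : Set V} :
    ∀ {x y : V}, G.Walk x y → x ∈ S → y ∉ S → ∃ a ∈ S, ∃ b, b ∉ S ∧ G.Adj a b := by
  intro x y p
  induction p with
  | nil => intro hx hy; exact absurd hx hy
  | @cons x z y h q ih =>
    intro hx hy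
    by_cases hz : z ∈ S
    · exact ih hz hy
    · exact ⟨x, hx, z, hz, h⟩
theorem extend {V : Type*} [Fintype V] (G : SimpleGraph V) (hconn : G.Connected)
    (hbl : ∀ e ∈ G.edgeSet, ¬ G.IsBridge e) :
    ∀ (n : ℕ) (S : Set V) (D : V → V → Prop), Sᶜ.ncard ≤ n → S.Nonempty →
    (∀ u v, D u v → G.Adj u v) → (∀ u v, D u v → ¬ D v u) →
    (∀ u v, D u v → u ∈ S ∧ v ∈ S) →
    (∀ x ∈ S, ∀ y ∈ S, ∃ k, reachIn D k x y) →
    ∃ D' : V → V → Prop, (∀ u v, D' u v → G.Adj u v) ∧ (∀ u v, D' u v → ¬ D' v u) ∧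
      (∀ x y : V, ∃ k, reachIn D' k x y) := by
  intro n
  induction n with
  | zero =>
    intro S D hcard _ hadj hasym _ hreach
    have hSu : S = Set.univ := by
      have : Sᶜ = ∅ := by
        rcases Set.eq_empty_or_nonempty Sᶜ with h | h
        · exact h
        · exfalso
          have hp := (Set.ncard_pos (s := Sᶜ) (Set.toFinite _)).mpr h
          omega
      rw [← Set.compl_empty, ← this, compl_compl]
    exact ⟨D, hadj, hasym, fun x y => hreach x (hSu ▸ Set.mem_univ x) y (hSu ▸ Set.mem_univ y)⟩
  | succ n ihn =>
    intro S D hcard hne hadj hasym hsub hreach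
    classical
    by_cases hSu : ∀ x, x ∈ S
    · exact ⟨D, hadj, hasym, fun x y => hreach x (hSu x) y (hSu y)⟩
    · push_neg at hSu
      obtain ⟨y0, hy0⟩ := hSu
      obtain ⟨x0, hx0⟩ := hne
      obtain ⟨a, haS, b, hbS, hab⟩ := cross ((hconn.preconnected x0 y0).some) hx0 hy0
      -- since s(a,b) is not a bridge, there is a walk from a to b avoiding s(a,b)
      have hnb := hbl s(a, b) (G.mem_edgeSet.mpr hab)
      rw [SimpleGraph.isBridge_iff] at hnb
      push_neg at hnb
      have hreachab := hnb
      have : (G \ SimpleGraph.fromEdgeSet {s(b, a)}).Reachable b a := by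
        rw [Sym2.eq_swap]; exact hreachab.symm
      rw [show G \ SimpleGraph.fromEdgeSet {s(b, a)} = G.deleteEdges {s(b, a)} from rfl,
        SimpleGraph.reachable_delete_edges_iff_exists_walk] at this
      obtain ⟨w, hw⟩ := this
      have hba : s(a, b) ∉ w.toPath.1.edges := by
        intro hmem
        exact hw (by rw [Sym2.eq_swap]; exact w.edges_toPath_subset hmem)
      have hndp : (w.toPath.1).support.Nodup := w.toPath.2.support_nodup
      -- initial data for grow
      set D1 : V → V → Prop := fun u v => D u v ∨ (u = a ∧ v = b) with hD1
      have hmono : ∀ k x y, reachIn D k x y → reachIn D1 k x y :=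
        reachIn_mono (fun u v huv => Or.inl huv)
      have hD1adj : ∀ u v, D1 u v → G.Adj u v := by
        rintro u v (huv | ⟨rfl, rfl⟩)
        · exact hadj _ _ huv
        · exact hab
      have hD1asym : ∀ u v, D1 u v → ¬ D1 v u := by
        rintro u v (huv | ⟨rfl, rfl⟩)
        · rintro (hvu | ⟨he1, he2⟩)
          · exact hasym _ _ huv hvu
          · exact hbS (he2 ▸ (hsub _ _ huv).1)
        · rintro (hvu | ⟨he1, he2⟩)
          · exact hbS (hsub _ _ hvu).1
          · exact hbS (he2 ▸ haS)
      have hsub1 : ∀ u v, D1 u v → u ∈ S ∪ {b} ∧ v ∈ S ∪ {b} := by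
        rintro u v (huv | ⟨rfl, rfl⟩)
        · exact ⟨Or.inl (hsub _ _ huv).1, Or.inl (hsub _ _ huv).2⟩
        · exact ⟨Or.inl haS, Or.inr rfl⟩
      have hreach1 : ∀ x ∈ S, ∀ y ∈ S ∪ {b}, ∃ k, reachIn D1 k x y := by
        intro x hx y hy
        rcases hy with hy | hy
        · obtain ⟨k, hk⟩ := hreach x hx y hy
          exact ⟨k, hmono _ _ _ hk⟩
        · rcases hy with rfl
          obtain ⟨k, hk⟩ := hreach x hx a haS
          exact ⟨1 + k, reachIn_trans k (hmono _ _ _ hk) 1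
            (reachIn_single (Or.inr ⟨rfl, rfl⟩))⟩
      have hto1 : ∀ x ∈ S ∪ {b}, ∃ k, reachIn D1 k x b := by
        intro x hx
        rcases hx with hx | hx
        · obtain ⟨k, hk⟩ := hreach x hx a haS
          exact ⟨1 + k, reachIn_trans k (hmono _ _ _ hk) 1
            (reachIn_single (Or.inr ⟨rfl, rfl⟩))⟩
        · rcases hx with rfl; exact ⟨0, rfl⟩
      have hfut1 : ∀ x, x ∈ (w.toPath.1).support.tail → x ∈ S ∪ {b} → x ∈ S := by
        intro x hx hxT
        rcases hxT with hxT | hxT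
        · exact hxT
        · rcases hxT with rfl
          exact absurd hndp (by
            intro hn
            exact (List.nodup_cons.mp ((w.toPath.1).support_eq_cons ▸ hn)).1 hx)
      have hinto1 : ∀ u v, D1 u v → v = b → s(u, b) ∉ (w.toPath.1).edges := by
        rintro u v (huv | ⟨he1, he2⟩) rfl
        · exact absurd ((hsub _ _ huv).2) hbS
        · subst he1; exact hba
      have hout1 : ∀ v, ¬ D1 b v := by
        rintro v (hv | ⟨he, _⟩)
        · exact hbS (hsub _ _ hv).1
        · exact hbS (he ▸ haS)
      obtain ⟨T', D', hTT', h1, h2, h3, h4⟩ :=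
        grow G S a haS b (w.toPath.1) hbS hndp (S ∪ {b}) D1
          (fun x hx => Or.inl hx) (Or.inr rfl)
          hD1adj hD1asym hsub1 hreach1 hto1 hfut1 hinto1 hout1
      -- recurse with the larger strongly connected set T'
      have hbT' : b ∈ T' := hTT' (Or.inr rfl)
      have hST' : S ⊆ T' := fun x hx => hTT' (Or.inl hx)
      have hcard' : T'ᶜ.ncard ≤ n := by
        have hsubc : T'ᶜ ⊆ Sᶜ \ {b} := by
          intro x hx
          exact ⟨fun hxS => hx (hST' hxS), fun hxb => hx (hxb ▸ hbT')⟩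
        have h1' : (Sᶜ \ {b}).ncard < Sᶜ.ncard :=
          Set.ncard_diff_singleton_lt_of_mem hbS (Set.toFinite _)
        have h2' : T'ᶜ.ncard ≤ (Sᶜ \ {b}).ncard :=
          Set.ncard_le_ncard hsubc (Set.toFinite _)
        omega
      exact ihn T' D' hcard' ⟨b, hbT'⟩ h1 h2 h3 h4
theorem ddist_lt_top {V : Type*} {D : V → V → Prop} {x y : V}
    (h : ∃ k, reachIn D k x y) : ddist D x y < ⊤ := by
  obtain ⟨k, hk⟩ := h
  exact lt_of_le_of_lt (sInf_le ⟨k, rfl, hk⟩) (WithTop.coe_lt_top k)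
theorem exists_reach_of_ddist_lt_top {V : Type*} {D : V → V → Prop} {x y : V}
    (h : ddist D x y < ⊤) : ∃ k, reachIn D k x y := by
  obtain ⟨a, ⟨k, hk, hre⟩, -⟩ := sInf_lt_iff.mp h
  exact ⟨k, hre⟩
theorem ddist_le_ddiam {V : Type*} {D : V → V → Prop} {x y : V} (h : x ≠ y) :
    ddist D x y ≤ ddiam D := le_sSup ⟨x, y, h, rfl⟩
theorem ddiam_lt_top {V : Type*} [Fintype V] {D : V → V → Prop}
    (h : ∀ x y : V, x ≠ y → ddist D x y < ⊤) : ddiam D < ⊤ := by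
  set A := {n : ℕ∞ | ∃ x y : V, x ≠ y ∧ ddist D x y = n} with hA
  have hfin : A.Finite := by
    apply Set.Finite.subset ((Set.finite_univ (α := V × V)).image
      (fun p : V × V => ddist D p.1 p.2))
    rintro n ⟨x, y, -, rfl⟩
    exact ⟨(x, y), Set.mem_univ _, rfl⟩
  rcases A.eq_empty_or_nonempty with he | hne
  · rw [ddiam, ← hA, he, sSup_empty]
    exact bot_lt_top
  · have hmem : sSup A ∈ A := Set.Nonempty.csSup_mem hne hfin
    obtain ⟨x, y, hxy, heq⟩ := hmem
    rw [ddiam, ← hA, ← heq]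
    exact h x y hxy
theorem reach_avoid {V : Type*} {G : SimpleGraph V} {D : V → V → Prop}
    (hadj : ∀ a b, D a b → G.Adj a b) (u v : V) (hnd : ¬ D v u) :
    ∀ k x, reachIn D k x u → (G \ SimpleGraph.fromEdgeSet {s(u, v)}).Reachable x u := by
  intro k
  induction k with
  | zero =>
    intro x hx
    cases hx
    exact SimpleGraph.Reachable.refl _
  | succ n ih =>
    rintro x ⟨z, hxz, hz⟩
    have hzu := ih z hz
    by_cases hxu : x = u
    · subst hxu; exact SimpleGraph.Reachable.refl _
    · have hne : s(x, z) ≠ s(u, v) := by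
        intro heq
        rcases Sym2.eq_iff.mp heq with ⟨h1, h2⟩ | ⟨h1, h2⟩
        · exact hxu h1
        · exact hnd (h1 ▸ h2 ▸ hxz)
      have hadj' : (G \ SimpleGraph.fromEdgeSet {s(u, v)}).Adj x z := by
        rw [SimpleGraph.sdiff_adj, SimpleGraph.fromEdgeSet_adj]
        exact ⟨hadj _ _ hxz, fun hc => hne hc.1⟩
      exact hadj'.reachable.trans hzu

/-- Robbins' theorem: a connected graph has an orientation of finite diameter iff it is
bridgeless. -/
theorem robbins {V : Type*} [Fintype V] (G : SimpleGraph V) (hconn : G.Connected) :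
    (∃ D : V → V → Prop, IsOrientation G D ∧ ddiam D < ⊤) ↔
      ∀ e ∈ G.edgeSet, ¬ G.IsBridge e := by
  constructor
  · rintro ⟨D, hor, hdiam⟩ e he hbridge
    induction e using Sym2.ind with
    | _ u v =>
      rw [SimpleGraph.mem_edgeSet] at he
      rw [SimpleGraph.isBridge_iff] at hbridge
      have hnr := hbridge
      have hadj : ∀ a b, D a b → G.Adj a b := fun a b h => (hor a b).1 h
      have hd := (hor u v).2 he
      by_cases hDuv : D u v
      · have hnvu : ¬ D v u := hd.mp hDuv
        have hlt : ddist D v u < ⊤ :=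
          lt_of_le_of_lt (ddist_le_ddiam he.ne.symm) hdiam
        obtain ⟨k, hk⟩ := exists_reach_of_ddist_lt_top hlt
        exact hnr (reach_avoid hadj u v hnvu k v hk).symm
      · have hlt : ddist D u v < ⊤ :=
          lt_of_le_of_lt (ddist_le_ddiam he.ne) hdiam
        obtain ⟨k, hk⟩ := exists_reach_of_ddist_lt_top hlt
        have := reach_avoid hadj v u hDuv k u hk
        rw [Sym2.eq_swap] at this
        exact hnr this
  · intro hbl
    obtain ⟨v0⟩ := hconn.nonempty
    obtain ⟨D', h1, h2, h3⟩ :=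
      extend G hconn hbl (({v0}ᶜ : Set V).ncard) {v0} (fun _ _ => False) le_rfl
        ⟨v0, rfl⟩ (fun _ _ h => h.elim) (fun _ _ h => h.elim) (fun _ _ h => h.elim)
        (fun x hx y hy => ⟨0, by
          rw [Set.mem_singleton_iff] at hx hy
          show x = y
          rw [hx, hy]⟩)
    -- complete the orientation using a well-ordering
    set r := (WellOrderingRel : V → V → Prop) with hr
    have hras : ∀ u w : V, r u w → ¬ r w u := by
      intro u w h h'
      exact irrefl u (IsTrans.trans u w u h h')
    have hrtri : ∀ u w : V, u ≠ w → (r u w ↔ ¬ r w u) := by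
      intro u w hne
      constructor
      · exact hras u w
      · intro h
        rcases trichotomous_of r u w with h' | h' | h'
        · exact h'
        · exact absurd h' hne
        · exact absurd h' h
    set D'' : V → V → Prop :=
      fun u w => D' u w ∨ (G.Adj u w ∧ ¬ D' u w ∧ ¬ D' w u ∧ r u w) with hD''
    refine ⟨D'', ?_, ?_⟩
    · intro u w
      constructor
      · rintro (h | ⟨h, -⟩)
        · exact h1 _ _ h
        · exact h
      · intro hadj
        by_cases huw : D' u w
        · constructor
          · rintro - (h | ⟨-, -, hn, -⟩)
            · exact h2 _ _ huw h
            · exact hn huw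
          · intro _; exact Or.inl huw
        · by_cases hwu : D' w u
          · constructor
            · rintro (h | ⟨-, -, hn, -⟩)
              · exact absurd h huw
              · exact absurd hwu hn
            · intro hnot
              exact absurd (Or.inl hwu) hnot
          · have e1 : D'' u w ↔ r u w := by
              constructor
              · rintro (h | ⟨-, -, -, h⟩)
                · exact absurd h huw
                · exact h
              · intro h; exact Or.inr ⟨hadj, huw, hwu, h⟩
            have e2 : D'' w u ↔ r w u := by
              constructor
              · rintro (h | ⟨-, -, -, h⟩)
                · exact absurd h hwu
                · exact h
              · intro h; exact Or.inr ⟨hadj.symm, hwu, huw, h⟩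
            rw [e1, e2]
            exact hrtri u w hadj.ne
    · apply ddiam_lt_top
      intro x y hxy
      apply ddist_lt_top
      obtain ⟨k, hk⟩ := h3 x y
      exact ⟨k, reachIn_mono (fun a b h => Or.inl h) k x y hk⟩
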